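/- Let N be an arbitrary subset of ℕ, regarded as a metric space with the distance d(m, n) = |m − n|. Then the group of bijections φ : N → N satisfying |φ(m) − φ(n)| = |m − n| for all m, n ∈ N has at most two elements. -/

import Mathlib

/-- Cost structure for the Levenshtein edit distance (removed from Mathlib; restored here
with its old definition from `Mathlib/Data/List/EditDistance/Defs.lean`). -/
structure Levenshtein.Cost (α β δ : Type*) where
  /-- Cost to delete an element from a list. -/
  delete : α → δ
  /-- Cost in insert an element into a list. -/
  insert : β → δ
  /-- Cost to substitute one element for another in a list. -/
  substitute : α → β → δ

/-- (Implementation detail for `suffixLevenshtein`) -/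
def Levenshtein.impl {α β δ : Type*} [AddZeroClass δ] [Min δ]
    (C : Levenshtein.Cost α β δ)
    (xs : List α) (y : β) (d : {r : List δ // 0 < r.length}) : {r : List δ // 0 < r.length} :=
  let ⟨ds, w⟩ := d
  xs.zip (ds.zip ds.tail) |>.foldr
    (init := ⟨[ds.getLast (List.length_pos_iff.mp w) + C.insert y], by simp⟩)
    (fun ⟨x, d₀, d₁⟩ ⟨r, w⟩ =>
      ⟨min (C.delete x + r[0]) (min (C.insert y + d₀) (C.substitute x y + d₁)) :: r, by simp⟩)

/-- `suffixLevenshtein C xs ys` computes the Levenshtein distance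
(using the cost functions provided by a `C : Cost α β δ`)
from each suffix of the list `xs` to the list `ys`. -/
def suffixLevenshtein {α β δ : Type*} [AddZeroClass δ] [Min δ]
    (C : Levenshtein.Cost α β δ) (xs : List α) (ys : List β) :
    {r : List δ // 0 < r.length} :=
  ys.foldr
    (Levenshtein.impl C xs)
    (xs.foldr (init := ⟨[0], by simp⟩)
      (fun a ⟨r, w⟩ => ⟨(C.delete a + r[0]) :: r, by simp⟩))

/-- `levenshtein C xs ys` computes the Levenshtein distance
(using the cost functions provided by a `C : Cost α β δ`)
from the list `xs` to the list `ys`. -/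
def levenshtein {α β δ : Type*} [AddZeroClass δ] [Min δ]
    (C : Levenshtein.Cost α β δ) (xs : List α) (ys : List β) : δ :=
  let ⟨r, w⟩ := suffixLevenshtein C xs ys
  r[0]

/-- Cost structure for the generalized Levenshtein distance:
insertions and deletions cost `γ`, substitutions cost `θ`. -/
def levCost (A : Type*) [DecidableEq A] (γ θ : ℝ) : Levenshtein.Cost A A ℝ where
  delete _ := γ
  insert _ := γ
  substitute a b := if a = b then 0 else θ

/-- The generalized Levenshtein distance `lev_{γ,θ}` between two words over `A`:
the minimal total cost of transforming one word into the other by insertions and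
deletions (of cost `γ`) and substitutions (of cost `θ`). -/
def lev {A : Type*} [DecidableEq A] (γ θ : ℝ) (u v : List A) : ℝ :=
  levenshtein (levCost A γ θ) u v

/-- The isometry group of a language `L ⊆ A*` with respect to a distance `d` on `A*`:
the group (under composition) of bijections of `L` preserving `d`. -/
def IsomGroup {A : Type*} (d : List A → List A → ℝ) (L : Set (List A)) :
    Subgroup (Equiv.Perm L) where
  carrier := {φ : Equiv.Perm L | ∀ u v : L, d (φ u) (φ v) = d u v}
  one_mem' := by intro u v; rfl
  mul_mem' := by intro φ ψ hφ hψ u v; simp only [Equiv.Perm.mul_apply]; rw [hφ, hψ]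
  inv_mem' := by
    intro φ hφ u v
    have h := hφ (φ⁻¹ u) (φ⁻¹ v)
    simpa using h.symm

/-- An isometry of `N ⊆ ℕ` fixing the minimum element is the identity. -/
lemma isom_fix_min {N : Set ℕ} (θ : Equiv.Perm N)
    (hθ : ∀ m n : N, Nat.dist (θ m : ℕ) (θ n : ℕ) = Nat.dist (m : ℕ) (n : ℕ))
    (m0 : N) (hmin : ∀ n : N, (m0 : ℕ) ≤ n) (hfix : θ m0 = m0) : θ = 1 := by
  ext n
  have h := hθ n m0
  rw [hfix] at h
  have h1 := hmin (θ n)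
  have h2 := hmin n
  simp only [Nat.dist] at h
  have : (θ n : ℕ) = n := by omega
  exact this

/-- If an isometry moves the minimum, its image of the minimum is a maximum of `N`. -/
lemma isom_move_min {N : Set ℕ} (θ : Equiv.Perm N)
    (hθ : ∀ m n : N, Nat.dist (θ m : ℕ) (θ n : ℕ) = Nat.dist (m : ℕ) (n : ℕ))
    (m0 : N) (hmin : ∀ n : N, (m0 : ℕ) ≤ n) (hne : θ m0 ≠ m0) :
    ∀ n : N, (n : ℕ) ≤ θ m0 := by
  set a := θ m0 with ha
  -- the preimage of m0 is a, i.e. θ a = m0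
  have hb : θ (θ.symm m0) = m0 := θ.apply_symm_apply m0
  have h1 := hθ (θ.symm m0) m0
  rw [hb, ← ha] at h1
  have hba : (θ.symm m0 : ℕ) = a := by
    have := hmin (θ.symm m0); have := hmin a
    simp only [Nat.dist] at h1; omega
  have hθa : θ a = m0 := by
    rw [← hb]; congr 1; exact Subtype.ext hba.symm
  intro n
  have d1 := hθ n a
  rw [hθa] at d1
  have d2 := hθ n m0
  rw [← ha] at d2
  have := hmin (θ n); have := hmin n; have := hmin a
  have hnem0 : (a : ℕ) ≠ m0 := fun h => hne (Subtype.ext h)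
  simp only [Nat.dist] at d1 d2
  omega

/-- Two isometries agreeing at the minimum are equal. -/
lemma isom_eq_of_eq_min {N : Set ℕ} (φ ψ : Equiv.Perm N)
    (hφ : ∀ m n : N, Nat.dist (φ m : ℕ) (φ n : ℕ) = Nat.dist (m : ℕ) (n : ℕ))
    (hψ : ∀ m n : N, Nat.dist (ψ m : ℕ) (ψ n : ℕ) = Nat.dist (m : ℕ) (n : ℕ))
    (m0 : N) (hmin : ∀ n : N, (m0 : ℕ) ≤ n) (heq : φ m0 = ψ m0) : φ = ψ := by
  have hψinv : ∀ m n : N, Nat.dist (ψ⁻¹ m : ℕ) (ψ⁻¹ n : ℕ) = Nat.dist (m : ℕ) (n : ℕ) := by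
    intro m n
    have := hψ (ψ⁻¹ m) (ψ⁻¹ n)
    simpa using this.symm
  have hθ : ∀ m n : N, Nat.dist ((ψ⁻¹ * φ) m : ℕ) ((ψ⁻¹ * φ) n : ℕ)
      = Nat.dist (m : ℕ) (n : ℕ) := by
    intro m n
    simp only [Equiv.Perm.mul_apply]
    rw [hψinv, hφ]
  have hfix : (ψ⁻¹ * φ) m0 = m0 := by
    simp only [Equiv.Perm.mul_apply, heq]
    exact ψ.symm_apply_apply m0
  have := isom_fix_min (ψ⁻¹ * φ) hθ m0 hmin hfix
  have : ψ * (ψ⁻¹ * φ) = ψ * 1 := by rw [this]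
  simpa [mul_assoc] using this

/-- For any subset `N ⊆ ℕ` with the distance `d(m, n) = |m - n|`, the
group of self-isometries of `N` (bijections preserving the distance) has at most two
elements. -/
theorem stmt_4 (N : Set ℕ) (φ ψ χ : Equiv.Perm N)
    (hφ : ∀ m n : N, Nat.dist (φ m : ℕ) (φ n : ℕ) = Nat.dist (m : ℕ) (n : ℕ))
    (hψ : ∀ m n : N, Nat.dist (ψ m : ℕ) (ψ n : ℕ) = Nat.dist (m : ℕ) (n : ℕ))
    (hχ : ∀ m n : N, Nat.dist (χ m : ℕ) (χ n : ℕ) = Nat.dist (m : ℕ) (n : ℕ)) :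
    φ = ψ ∨ φ = χ ∨ ψ = χ := by
  rcases N.eq_empty_or_nonempty with hN | hN
  · left
    subst hN
    ext n
    exact absurd n.2 (Set.notMem_empty _)
  · set m0 : N := ⟨sInf N, Nat.sInf_mem hN⟩ with hm0
    have hmin : ∀ n : N, (m0 : ℕ) ≤ n := fun n => Nat.sInf_le n.2
    by_cases h12 : φ m0 = ψ m0
    · exact Or.inl (isom_eq_of_eq_min φ ψ hφ hψ m0 hmin h12)
    by_cases h13 : φ m0 = χ m0
    · exact Or.inr (Or.inl (isom_eq_of_eq_min φ χ hφ hχ m0 hmin h13))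
    by_cases h23 : ψ m0 = χ m0
    · exact Or.inr (Or.inr (isom_eq_of_eq_min ψ χ hψ hχ m0 hmin h23))
    exfalso
    -- among three pairwise distinct values at m0, two are ≠ m0; both are maxima, contradiction
    by_cases hφ0 : φ m0 = m0
    · have hψ0 : ψ m0 ≠ m0 := fun h => h12 (hφ0.trans h.symm)
      have hχ0 : χ m0 ≠ m0 := fun h => h13 (hφ0.trans h.symm)
      have u1 := isom_move_min ψ hψ m0 hmin hψ0 (χ m0)
      have u2 := isom_move_min χ hχ m0 hmin hχ0 (ψ m0)
      exact h23 (Subtype.ext (le_antisymm u2 u1))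
    · by_cases hψ0 : ψ m0 = m0
      · have hχ0 : χ m0 ≠ m0 := fun h => h23 (hψ0.trans h.symm)
        have u1 := isom_move_min φ hφ m0 hmin hφ0 (χ m0)
        have u2 := isom_move_min χ hχ m0 hmin hχ0 (φ m0)
        exact h13 (Subtype.ext (le_antisymm u2 u1))
      · have u1 := isom_move_min φ hφ m0 hmin hφ0 (ψ m0)
        have u2 := isom_move_min ψ hψ m0 hmin hψ0 (φ m0)
        exact h12 (Subtype.ext (le_antisymm u2 u1))
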